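/- For the Lagrangian gas dynamics Roe matrix A(ū) with ū = ((τ_l+τ_r)/2, (u_l+u_r)/2, p̄τ̄/(γ−1)) where p̄ = (p_l+p_r)/2, the jump relation A(ū)·(Δτ, Δu, Δe)ᵀ equals the straight-segment path integral (−Δu, Δp, ((p_l+p_r)/2)Δu)ᵀ, where Δe = e_r − e_l with e_i = p_iτ_i/(γ−1). -/
import Mathlib


/-- The Roe matrix of Lagrangian gas dynamics, evaluated at the arithmetic
averages, maps the jump (Δτ, Δu, Δe) to (−Δu, Δp, p̄ Δu). -/
theorem lagrangian_roe_jump (γ τl ul pl τr ur pr : ℝ)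
    (hγ : γ > 1) (hτl : τl > 0) (hτr : τr > 0) :
    let τb := (τl + τr) / 2
    let pb := (pl + pr) / 2
    let eb := pb * τb / (γ - 1)
    let el := pl * τl / (γ - 1)
    let er := pr * τr / (γ - 1)
    let A : Matrix (Fin 3) (Fin 3) ℝ :=
      !![0, -1, 0; -((γ - 1) * eb) / τb ^ 2, 0, (γ - 1) / τb; 0, (γ - 1) * eb / τb, 0]
    A.mulVec ![τr - τl, ur - ul, er - el]
      = ![-(ur - ul), pr - pl, pb * (ur - ul)] := by
  intro τb pb eb el er A
  have hγ1 : γ - 1 ≠ 0 := by linarith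
  have hs : τl + τr ≠ 0 := by positivity
  funext i
  fin_cases i <;>
    simp [A, Matrix.mulVec, dotProduct, Fin.sum_univ_three, eb, el, er, pb, τb] <;>
    field_simp <;> (try ring) <;> tauto
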